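/- Let n : ℕ and let s : ℕ → ℕ → Bool be such that for every i < n there exists j with s i j = true. Then Ψₙ(s) = ω · (n + 1). -/

import Mathlib

/-- A Boolean sequence `b` semidecides a proposition `Q` if `Q ↔ ∃ j, b j = true`. -/
def Semidecides (b : ℕ → Bool) (Q : Prop) : Prop :=
  Q ↔ ∃ j, b j = true

open Classical in
/-- `tCount s n k` is the number of indices `i < n` such that `s i j = true` for some `j ≤ k`. -/
noncomputable def tCount (s : ℕ → ℕ → Bool) (n k : ℕ) : ℕ :=
  ((Finset.range n).filter (fun i => ∃ j ≤ k, s i j = true)).card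

/-- The `n`-th characteristic approximant `Ψₙ(s)`. -/
noncomputable def psiApprox (s : ℕ → ℕ → Bool) (n : ℕ) : Ordinal :=
  ⨆ k : ℕ, (Ordinal.omega0 * (tCount s n k) + k)

/-- The characteristic ordinal `Ψ(s)`. -/
noncomputable def psi (s : ℕ → ℕ → Bool) : Ordinal :=
  ⨆ n : ℕ, (psiApprox s n + n)

theorem psiApprox_of_all_true (n : ℕ) (s : ℕ → ℕ → Bool)
    (hs : ∀ i < n, ∃ j, s i j = true) :
    psiApprox s n = Ordinal.omega0 * (n + 1) := by
    classical
  have htle : ∀ k, tCount s n k ≤ n := fun k => by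
    simpa [tCount] using Finset.card_filter_le (Finset.range n) _
  -- find K with tCount s n K = n
  choose f hf using fun i (h : i < n) => hs i h
  set K := (Finset.range n).sup (fun i => if h : i < n then f i h else 0) with hK
  have htK : tCount s n K = n := by
    have : (Finset.range n).filter (fun i => ∃ j ≤ K, s i j = true) = Finset.range n := by
      apply Finset.filter_true_of_mem
      intro i hi
      have hi' := Finset.mem_range.1 hi
      refine ⟨f i hi', ?_, hf i hi'⟩
      have := Finset.le_sup (f := fun i => if h : i < n then f i h else 0) hi
      simpa [hi'] using this
    simp [tCount, this]
  apply le_antisymm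
  · apply Ordinal.iSup_le
    intro k
    have h1 : Ordinal.omega0 * (tCount s n k) + (k : Ordinal) <
        Ordinal.omega0 * (tCount s n k) + Ordinal.omega0 := by
      exact add_lt_add_right (Ordinal.nat_lt_omega0 k) _
    have h2 : Ordinal.omega0 * (tCount s n k) + Ordinal.omega0 =
        Ordinal.omega0 * ((tCount s n k : Ordinal) + 1) := by
      rw [mul_add, mul_one]
    have h3 : Ordinal.omega0 * ((tCount s n k : Ordinal) + 1) ≤
        Ordinal.omega0 * ((n : Ordinal) + 1) := by
      apply mul_le_mul_right
      exact add_le_add_left (by exact_mod_cast htle k) 1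
    push_cast
    exact le_trans (le_of_lt (h2 ▸ h1)) (by push_cast at h3 ⊢; exact h3)
  · have : Ordinal.omega0 * ((n : Ordinal) + 1) = ⨆ k : ℕ, Ordinal.omega0 * n + k := by
      rw [Ordinal.iSup_add_natCast, mul_add, mul_one]
    push_cast
    rw [this]
    apply Ordinal.iSup_le
    intro k
    have hmono : tCount s n K ≤ tCount s n (max k K) := by
      apply Finset.card_le_card
      intro i hi
      simp only [Finset.mem_filter] at hi ⊢
      obtain ⟨hi1, j, hj, hsj⟩ := hi
      exact ⟨hi1, j, hj.trans (le_max_right k K), hsj⟩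
    have ht' : tCount s n (max k K) = n := le_antisymm (htle _) (by omega)
    have : Ordinal.omega0 * n + k ≤ Ordinal.omega0 * (tCount s n (max k K)) + (max k K : ℕ) := by
      rw [ht']
      exact add_le_add_right (by exact_mod_cast le_max_left k K) _
    refine this.trans ?_
    rw [psiApprox]
    exact le_ciSup (Ordinal.bddAbove_range _) (max k K)
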